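/- The relation ≤_pl of non-uniform polynomial-length reducibility on Boolean function families is reflexive and transitive. -/

import Mathlib

/-- Boolean register names: `inp i` is input register `in:(i+1)`,
`aux i` is auxiliary register `aux:(i+1)`, `out` is the output register. -/
inductive Reg where
  | inp : ℕ → Reg
  | aux : ℕ → Reg
  | out : Reg
deriving DecidableEq

/-- Basic instructions: register reads/writes, and (for splitting instruction
sequences) `split p` and `reply p` for Boolean parameters `p`. -/
inductive BInstr where
  | get : Reg → BInstr
  | set : Reg → Bool → BInstr
  | split : ℕ → BInstr
  | reply : ℕ → BInstr
deriving DecidableEq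

/-- Primitive instructions. -/
inductive PInstr where
  | plain : BInstr → PInstr
  | pos : BInstr → PInstr
  | neg : BInstr → PInstr
  | jump : ℕ → PInstr
  | halt : PInstr
deriving DecidableEq

abbrev RegState := Reg → Bool

/-- State change caused by processing a basic instruction. -/
def BInstr.effect : BInstr → RegState → RegState
  | .set r b, s => Function.update s r b
  | _, s => s

/-- Reply produced by processing a basic instruction. -/
def BInstr.rpl : BInstr → RegState → Bool
  | .get r, s => s r
  | .set _ b, _ => b
  | _, _ => false

def BInstr.isSplitReply : BInstr → Bool
  | .split _ => true
  | .reply _ => true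
  | _ => false

/-- Single-thread execution of an instruction sequence on Boolean registers;
`none` means deadlock, `some s` means termination in register state `s`.
(`split`/`reply` instructions make no sense here and deadlock.) -/
def exec : List PInstr → RegState → Option RegState
  | [], _ => none
  | .plain a :: X, s =>
      if a.isSplitReply then none else exec X (a.effect s)
  | .pos a :: X, s =>
      if a.isSplitReply then none
      else if a.rpl s then exec X (a.effect s) else exec (X.drop 1) (a.effect s)
  | .neg a :: X, s =>
      if a.isSplitReply then none
      else if a.rpl s then exec (X.drop 1) (a.effect s) else exec X (a.effect s)
  | .jump 0 :: _, _ => none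
  | .jump (l+1) :: X, s => exec (X.drop l) s
  | .halt :: _, s => some s
termination_by X _ => X.length
decreasing_by all_goals (simp only [List.length_drop, List.length_cons]; omega)

/-- Initial register state: input registers `in:1 .. in:n` contain
`b 0, ..., b (n-1)`; all other registers contain `false`. -/
def initState (n : ℕ) (b : Fin n → Bool) : RegState := fun r =>
  match r with
  | .inp i => if h : i < n then b ⟨i, h⟩ else false
  | _ => false

/-- `X` computes the `n`-ary Boolean function `f`: for every input, execution
terminates (does not deadlock) with the output register containing `f b`. -/
def Computes {n : ℕ} (f : (Fin n → Bool) → Bool) (X : List PInstr) : Prop :=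
  ∀ b : Fin n → Bool, ∃ s : RegState,
    exec X (initState n b) = some s ∧ s Reg.out = f b

/-- Basic instructions allowed in `IS_br`. -/
def BrBasic : BInstr → Prop
  | .get (.inp _) => True
  | .get (.aux _) => True
  | .set (.aux _) _ => True
  | .set .out _ => True
  | _ => False

/-- Basic instructions allowed in `IS_br^na`. -/
def NaBasic : BInstr → Prop
  | .get (.inp _) => True
  | .set .out _ => True
  | _ => False

def InstrBasicOK (P : BInstr → Prop) : PInstr → Prop
  | .plain a => P a
  | .pos a => P a
  | .neg a => P a
  | _ => True

/-- Membership of `IS_br` (non-empty, only allowed basic instructions). -/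
def ISbr (X : List PInstr) : Prop :=
  X ≠ [] ∧ ∀ u ∈ X, InstrBasicOK BrBasic u

/-- Membership of `IS_br^na`. -/
def ISbrna (X : List PInstr) : Prop :=
  X ≠ [] ∧ ∀ u ∈ X, InstrBasicOK NaBasic u

/-- The primitive instruction contains the basic instruction `out.set:false`. -/
def UsesOutSetFalse : PInstr → Prop
  | .plain (.set .out false) => True
  | .pos (.set .out false) => True
  | .neg (.set .out false) => True
  | _ => False

/-- The class PLIS of Boolean function families computable by
polynomial-length instruction sequences from `IS_br`. -/
def PLIS (F : (n : ℕ) → (Fin n → Bool) → Bool) : Prop :=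
  ∃ h : Polynomial ℕ, ∀ n : ℕ, ∃ X : List PInstr,
    ISbr X ∧ Computes (F n) X ∧ X.length ≤ h.eval n

/-- `f` is length-`l` reducible to `g`. -/
def LengthRed (l : ℕ) {n m : ℕ} (f : (Fin n → Bool) → Bool)
    (g : (Fin m → Bool) → Bool) : Prop :=
  ∃ h : Fin m → (Fin n → Bool) → Bool,
    (∀ j : Fin m, ∃ X : List PInstr, ISbr X ∧ Computes (h j) X ∧ X.length ≤ l) ∧
    ∀ b : Fin n → Bool, f b = g (fun j => h j b)

/-- Non-uniform polynomial-length reducibility of Boolean function families. -/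
def PLRed (F G : (n : ℕ) → (Fin n → Bool) → Bool) : Prop :=
  ∃ q : Polynomial ℕ, ∀ n : ℕ, ∃ l m : ℕ,
    l ≤ q.eval n ∧ m ≤ q.eval n ∧ LengthRed l (F n) (G m)

/-! ### Auxiliary machinery -/

section Aux

/-- Rename registers in a basic instruction. -/
def rnB (ρ : Reg → Reg) : BInstr → BInstr
  | .get r => .get (ρ r)
  | .set r b => .set (ρ r) b
  | .split p => .split p
  | .reply p => .reply p

def rnP (ρ : Reg → Reg) : PInstr → PInstr
  | .plain a => .plain (rnB ρ a)
  | .pos a => .pos (rnB ρ a)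
  | .neg a => .neg (rnB ρ a)
  | .jump l => .jump l
  | .halt => .halt

def rnIS (ρ : Reg → Reg) (X : List PInstr) : List PInstr := X.map (rnP ρ)

lemma rnIS_length (ρ : Reg → Reg) (X : List PInstr) : (rnIS ρ X).length = X.length :=
  List.length_map _

lemma rnIS_drop (ρ : Reg → Reg) (X : List PInstr) (l : ℕ) :
    (rnIS ρ X).drop l = rnIS ρ (X.drop l) := List.map_drop.symm

lemma rnB_isSplitReply (ρ : Reg → Reg) (a : BInstr) :
    (rnB ρ a).isSplitReply = a.isSplitReply := by
  cases a <;> rfl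

lemma rnB_rpl (ρ : Reg → Reg) (a : BInstr) (s₁ s₂ : RegState)
    (hs : ∀ r, s₂ (ρ r) = s₁ r) : (rnB ρ a).rpl s₂ = a.rpl s₁ := by
  cases a <;> simp [rnB, BInstr.rpl, hs]

lemma rnB_effect (ρ : Reg → Reg) (hinj : Function.Injective ρ) (a : BInstr)
    (s₁ s₂ : RegState) (hs : ∀ r, s₂ (ρ r) = s₁ r) :
    (∀ r, (rnB ρ a).effect s₂ (ρ r) = a.effect s₁ r) ∧
    (∀ r, (∀ r', ρ r' ≠ r) → (rnB ρ a).effect s₂ r = s₂ r) := by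
  cases a with
  | set r b =>
    constructor
    · intro r'
      by_cases h : r' = r
      · subst h; simp [rnB, BInstr.effect]
      · have : ρ r' ≠ ρ r := fun hc => h (hinj hc)
        simp [rnB, BInstr.effect, Function.update_of_ne this, Function.update_of_ne h, hs]
    · intro r' hr'
      exact Function.update_of_ne (fun hc => (hr' r) hc.symm) _ _
  | get r => exact ⟨fun r' => hs r', fun _ _ => rfl⟩
  | split p => exact ⟨fun r' => hs r', fun _ _ => rfl⟩
  | reply p => exact ⟨fun r' => hs r', fun _ _ => rfl⟩

/-- Renaming lemma: executing a renamed sequence. -/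
theorem exec_rename (ρ : Reg → Reg) (hinj : Function.Injective ρ) :
    ∀ (X : List PInstr) (s₁ s₂ t₁ : RegState), (∀ r, s₂ (ρ r) = s₁ r) →
    exec X s₁ = some t₁ →
    ∃ t₂, exec (rnIS ρ X) s₂ = some t₂ ∧ (∀ r, t₂ (ρ r) = t₁ r) ∧
      (∀ r, (∀ r', ρ r' ≠ r) → t₂ r = s₂ r)
  | [], s₁, s₂, t₁, hs, h => by simp [exec] at h
  | .plain a :: X, s₁, s₂, t₁, hs, h => by
    rw [exec] at h
    by_cases hsp : a.isSplitReply
    · simp [hsp] at h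
    · simp only [hsp, if_false] at h
      obtain ⟨he, hoff⟩ := rnB_effect ρ hinj a s₁ s₂ hs
      obtain ⟨t₂, h1, h2, h3⟩ := exec_rename ρ hinj X (a.effect s₁) ((rnB ρ a).effect s₂) t₁ he h
      refine ⟨t₂, ?_, h2, fun r hr => (h3 r hr).trans (hoff r hr)⟩
      rw [show rnIS ρ (.plain a :: X) = .plain (rnB ρ a) :: rnIS ρ X from rfl, exec,
        rnB_isSplitReply]
      simp [hsp, h1]
  | .pos a :: X, s₁, s₂, t₁, hs, h => by
    rw [exec] at h
    by_cases hsp : a.isSplitReply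
    · simp [hsp] at h
    · simp only [hsp, if_false] at h
      obtain ⟨he, hoff⟩ := rnB_effect ρ hinj a s₁ s₂ hs
      by_cases hr : a.rpl s₁
      · simp only [hr, if_true] at h
        obtain ⟨t₂, h1, h2, h3⟩ := exec_rename ρ hinj X (a.effect s₁) ((rnB ρ a).effect s₂) t₁ he h
        refine ⟨t₂, ?_, h2, fun r hrr => (h3 r hrr).trans (hoff r hrr)⟩
        rw [show rnIS ρ (.pos a :: X) = .pos (rnB ρ a) :: rnIS ρ X from rfl, exec,
          rnB_isSplitReply, rnB_rpl ρ a s₁ s₂ hs]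
        simp [hsp, hr, h1]
      · simp only [hr, if_false] at h
        obtain ⟨t₂, h1, h2, h3⟩ := exec_rename ρ hinj (X.drop 1) (a.effect s₁)
          ((rnB ρ a).effect s₂) t₁ he h
        refine ⟨t₂, ?_, h2, fun r hrr => (h3 r hrr).trans (hoff r hrr)⟩
        rw [show rnIS ρ (.pos a :: X) = .pos (rnB ρ a) :: rnIS ρ X from rfl, exec,
          rnB_isSplitReply, rnB_rpl ρ a s₁ s₂ hs]
        simp only [hsp, hr, if_false, if_true, rnIS_drop]
        exact h1
  | .neg a :: X, s₁, s₂, t₁, hs, h => by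
    rw [exec] at h
    by_cases hsp : a.isSplitReply
    · simp [hsp] at h
    · simp only [hsp, if_false] at h
      obtain ⟨he, hoff⟩ := rnB_effect ρ hinj a s₁ s₂ hs
      by_cases hr : a.rpl s₁
      · simp only [hr, if_true] at h
        obtain ⟨t₂, h1, h2, h3⟩ := exec_rename ρ hinj (X.drop 1) (a.effect s₁)
          ((rnB ρ a).effect s₂) t₁ he h
        refine ⟨t₂, ?_, h2, fun r hrr => (h3 r hrr).trans (hoff r hrr)⟩
        rw [show rnIS ρ (.neg a :: X) = .neg (rnB ρ a) :: rnIS ρ X from rfl, exec,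
          rnB_isSplitReply, rnB_rpl ρ a s₁ s₂ hs]
        simp only [hsp, hr, if_false, if_true, rnIS_drop]
        exact h1
      · simp only [hr, if_false] at h
        obtain ⟨t₂, h1, h2, h3⟩ := exec_rename ρ hinj X (a.effect s₁) ((rnB ρ a).effect s₂) t₁ he h
        refine ⟨t₂, ?_, h2, fun r hrr => (h3 r hrr).trans (hoff r hrr)⟩
        rw [show rnIS ρ (.neg a :: X) = .neg (rnB ρ a) :: rnIS ρ X from rfl, exec,
          rnB_isSplitReply, rnB_rpl ρ a s₁ s₂ hs]
        simp [hsp, hr, h1]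
  | .jump 0 :: X, s₁, s₂, t₁, hs, h => by rw [exec] at h; exact absurd h (by simp)
  | .jump (l+1) :: X, s₁, s₂, t₁, hs, h => by
    rw [exec] at h
    obtain ⟨t₂, h1, h2, h3⟩ := exec_rename ρ hinj (X.drop l) s₁ s₂ t₁ hs h
    refine ⟨t₂, ?_, h2, h3⟩
    rw [show rnIS ρ (.jump (l+1) :: X) = .jump (l+1) :: rnIS ρ X from rfl, exec, rnIS_drop]
    exact h1
  | .halt :: X, s₁, s₂, t₁, hs, h => by
    rw [exec] at h
    refine ⟨s₂, ?_, fun r => by rw [hs r, ← Option.some_inj.mp h], fun r _ => rfl⟩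
    rw [show rnIS ρ (.halt :: X) = .halt :: rnIS ρ X from rfl, exec]
termination_by X => X.length
decreasing_by all_goals (simp only [List.length_drop, List.length_cons]; omega)

end Aux

section Aux2

/-- Replace every `halt` by a jump past the end of the sequence. -/
def noHalt : List PInstr → List PInstr
  | [] => []
  | .halt :: X => .jump (X.length + 1) :: noHalt X
  | u :: X => u :: noHalt X

@[simp] lemma noHalt_length : ∀ X : List PInstr, (noHalt X).length = X.length
  | [] => rfl
  | .halt :: X => by simp [noHalt, noHalt_length X]
  | .plain a :: X => by simp [noHalt, noHalt_length X]
  | .pos a :: X => by simp [noHalt, noHalt_length X]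
  | .neg a :: X => by simp [noHalt, noHalt_length X]
  | .jump l :: X => by simp [noHalt, noHalt_length X]

lemma noHalt_drop : ∀ (X : List PInstr) (l : ℕ), (noHalt X).drop l = noHalt (X.drop l)
  | X, 0 => rfl
  | [], l+1 => rfl
  | .halt :: X, l+1 => by simpa [noHalt] using noHalt_drop X l
  | .plain a :: X, l+1 => by simpa [noHalt] using noHalt_drop X l
  | .pos a :: X, l+1 => by simpa [noHalt] using noHalt_drop X l
  | .neg a :: X, l+1 => by simpa [noHalt] using noHalt_drop X l
  | .jump j :: X, l+1 => by simpa [noHalt] using noHalt_drop X l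

lemma noHalt_mem {u : PInstr} : ∀ {X : List PInstr}, u ∈ noHalt X →
    u ∈ X ∨ ∃ l, u = .jump l
  | [], h => by simp [noHalt] at h
  | .halt :: X, h => by
    simp only [noHalt, List.mem_cons] at h
    rcases h with h | h
    · exact Or.inr ⟨_, h⟩
    · rcases noHalt_mem h with h' | h'
      · exact Or.inl (List.mem_cons_of_mem _ h')
      · exact Or.inr h'
  | .plain a :: X, h => by
    simp only [noHalt, List.mem_cons] at h
    rcases h with h | h
    · exact Or.inl (by simp [h])
    · rcases noHalt_mem h with h' | h'
      · exact Or.inl (List.mem_cons_of_mem _ h')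
      · exact Or.inr h'
  | .pos a :: X, h => by
    simp only [noHalt, List.mem_cons] at h
    rcases h with h | h
    · exact Or.inl (by simp [h])
    · rcases noHalt_mem h with h' | h'
      · exact Or.inl (List.mem_cons_of_mem _ h')
      · exact Or.inr h'
  | .neg a :: X, h => by
    simp only [noHalt, List.mem_cons] at h
    rcases h with h | h
    · exact Or.inl (by simp [h])
    · rcases noHalt_mem h with h' | h'
      · exact Or.inl (List.mem_cons_of_mem _ h')
      · exact Or.inr h'
  | .jump j :: X, h => by
    simp only [noHalt, List.mem_cons] at h
    rcases h with h | h
    · exact Or.inr ⟨_, h⟩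
    · rcases noHalt_mem h with h' | h'
      · exact Or.inl (List.mem_cons_of_mem _ h')
      · exact Or.inr h'

/-- Appending after halt-removal: if `X` terminates in state `t`, then
`noHalt X ++ rest` continues with `rest` from `t`. -/
theorem exec_noHalt_append :
    ∀ (X : List PInstr) (s t : RegState) (rest : List PInstr),
    exec X s = some t → exec (noHalt X ++ rest) s = exec rest t
  | [], s, t, rest, h => by simp [exec] at h
  | .plain a :: X, s, t, rest, h => by
    rw [exec] at h
    by_cases hsp : a.isSplitReply
    · simp [hsp] at h
    · simp only [hsp, if_false] at h
      rw [show noHalt (.plain a :: X) ++ rest = .plain a :: (noHalt X ++ rest) from rfl, exec]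
      simp only [hsp, if_false]
      exact exec_noHalt_append X _ t rest h
  | .pos a :: X, s, t, rest, h => by
    rw [exec] at h
    by_cases hsp : a.isSplitReply
    · simp [hsp] at h
    · simp only [hsp, if_false] at h
      rw [show noHalt (.pos a :: X) ++ rest = .pos a :: (noHalt X ++ rest) from rfl, exec]
      simp only [hsp, if_false]
      by_cases hr : a.rpl s
      · simp only [hr, if_true] at h ⊢
        exact exec_noHalt_append X _ t rest h
      · simp only [hr, if_false] at h ⊢
        have hx : X ≠ [] := by rintro rfl; simp [exec] at h
        rw [show (noHalt X ++ rest).drop 1 = (noHalt X).drop 1 ++ rest by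
          apply List.drop_append_of_le_length
          simpa [Nat.one_le_iff_ne_zero, List.length_eq_zero_iff] using hx]
        rw [noHalt_drop]
        exact exec_noHalt_append (X.drop 1) _ t rest h
  | .neg a :: X, s, t, rest, h => by
    rw [exec] at h
    by_cases hsp : a.isSplitReply
    · simp [hsp] at h
    · simp only [hsp, if_false] at h
      rw [show noHalt (.neg a :: X) ++ rest = .neg a :: (noHalt X ++ rest) from rfl, exec]
      simp only [hsp, if_false]
      by_cases hr : a.rpl s
      · simp only [hr, if_true] at h ⊢
        have hx : X ≠ [] := by rintro rfl; simp [exec] at h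
        rw [show (noHalt X ++ rest).drop 1 = (noHalt X).drop 1 ++ rest by
          apply List.drop_append_of_le_length
          simpa [Nat.one_le_iff_ne_zero, List.length_eq_zero_iff] using hx]
        rw [noHalt_drop]
        exact exec_noHalt_append (X.drop 1) _ t rest h
      · simp only [hr, if_false] at h ⊢
        exact exec_noHalt_append X _ t rest h
  | .jump 0 :: X, s, t, rest, h => by rw [exec] at h; exact absurd h (by simp)
  | .jump (l+1) :: X, s, t, rest, h => by
    rw [exec] at h
    rw [show noHalt (.jump (l+1) :: X) ++ rest = .jump (l+1) :: (noHalt X ++ rest) from rfl, exec]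
    by_cases hl : l ≤ X.length
    · rw [List.drop_append_of_le_length (by simpa using hl), noHalt_drop]
      exact exec_noHalt_append _ _ t rest h
    · rw [List.drop_eq_nil_of_le (le_of_not_ge hl)] at h
      simp [exec] at h
  | .halt :: X, s, t, rest, h => by
    rw [exec] at h
    obtain rfl : s = t := Option.some_inj.mp h
    rw [show noHalt (.halt :: X) ++ rest = .jump (X.length + 1) :: (noHalt X ++ rest) from rfl,
      exec]
    rw [show (noHalt X ++ rest).drop X.length = rest by
      rw [← noHalt_length X]; exact List.drop_left]
termination_by X => X.length
decreasing_by all_goals (simp only [List.length_drop, List.length_cons]; omega)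

/-- `IS_br` instruction sequences never modify input registers. -/
theorem exec_inp_invariant :
    ∀ (X : List PInstr), (∀ u ∈ X, InstrBasicOK BrBasic u) →
    ∀ (s t : RegState), exec X s = some t → ∀ i, t (.inp i) = s (.inp i) := by
  have heff : ∀ a : BInstr, BrBasic a → ∀ s i, a.effect s (.inp i) = s (.inp i) := by
    intro a ha s i
    cases a with
    | set r b =>
      cases r with
      | inp j => exact absurd ha (by simp [BrBasic])
      | aux j => simp [BInstr.effect, Function.update_of_ne]
      | out => simp [BInstr.effect, Function.update_of_ne]
    | get r => rfl
    | split p => rfl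
    | reply p => rfl
  exact go heff
where
  go (heff : ∀ a : BInstr, BrBasic a → ∀ s i, a.effect s (.inp i) = s (.inp i)) :
    ∀ (X : List PInstr), (∀ u ∈ X, InstrBasicOK BrBasic u) →
    ∀ (s t : RegState), exec X s = some t → ∀ i, t (.inp i) = s (.inp i)
  | [], _, s, t, h => by simp [exec] at h
  | .plain a :: X, hOK, s, t, h => by
    rw [exec] at h
    by_cases hsp : a.isSplitReply
    · simp [hsp] at h
    · simp only [hsp, if_false] at h
      intro i
      have ha : BrBasic a := hOK _ List.mem_cons_self
      rw [go heff X (fun u hu => hOK u (List.mem_cons_of_mem _ hu)) _ t h i, heff a ha s i]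
  | .pos a :: X, hOK, s, t, h => by
    rw [exec] at h
    by_cases hsp : a.isSplitReply
    · simp [hsp] at h
    · simp only [hsp, if_false] at h
      intro i
      have ha : BrBasic a := hOK _ List.mem_cons_self
      by_cases hr : a.rpl s
      · simp only [hr, if_true] at h
        rw [go heff X (fun u hu => hOK u (List.mem_cons_of_mem _ hu)) _ t h i, heff a ha s i]
      · simp only [hr, if_false] at h
        rw [go heff (X.drop 1)
          (fun u hu => hOK u (List.mem_cons_of_mem _ (List.drop_subset _ _ hu))) _ t h i,
          heff a ha s i]
  | .neg a :: X, hOK, s, t, h => by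
    rw [exec] at h
    by_cases hsp : a.isSplitReply
    · simp [hsp] at h
    · simp only [hsp, if_false] at h
      intro i
      have ha : BrBasic a := hOK _ List.mem_cons_self
      by_cases hr : a.rpl s
      · simp only [hr, if_true] at h
        rw [go heff (X.drop 1)
          (fun u hu => hOK u (List.mem_cons_of_mem _ (List.drop_subset _ _ hu))) _ t h i,
          heff a ha s i]
      · simp only [hr, if_false] at h
        rw [go heff X (fun u hu => hOK u (List.mem_cons_of_mem _ hu)) _ t h i, heff a ha s i]
  | .jump 0 :: X, hOK, s, t, h => by rw [exec] at h; exact absurd h (by simp)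
  | .jump (l+1) :: X, hOK, s, t, h => by
    rw [exec] at h
    exact go heff (X.drop l)
      (fun u hu => hOK u (List.mem_cons_of_mem _ (List.drop_subset _ _ hu))) _ t h
  | .halt :: X, hOK, s, t, h => by
    rw [exec] at h
    obtain rfl : s = t := Option.some_inj.mp h
    exact fun i => rfl
termination_by X => X.length
decreasing_by all_goals (simp only [List.length_drop, List.length_cons]; omega)

end Aux2

section Aux3

/-- A register renaming that keeps instruction sequences inside `IS_br`. -/
def GoodRho (ρ : Reg → Reg) : Prop :=
  (∀ i, (∃ i', ρ (.inp i) = .inp i') ∨ (∃ i', ρ (.inp i) = .aux i')) ∧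
  (∀ i, ∃ i', ρ (.aux i) = .aux i') ∧
  ((∃ i', ρ .out = .aux i') ∨ ρ .out = .out)

lemma rnB_brBasic {ρ : Reg → Reg} (hρ : GoodRho ρ) {a : BInstr} (ha : BrBasic a) :
    BrBasic (rnB ρ a) := by
  obtain ⟨h1, h2, h3⟩ := hρ
  cases a with
  | get r =>
    cases r with
    | inp i =>
      rcases h1 i with ⟨i', hi⟩ | ⟨i', hi⟩ <;> simp [rnB, hi, BrBasic]
    | aux i => obtain ⟨i', hi⟩ := h2 i; simp [rnB, hi, BrBasic]
    | out => exact absurd ha (by simp [BrBasic])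
  | set r b =>
    cases r with
    | inp i => exact absurd ha (by simp [BrBasic])
    | aux i => obtain ⟨i', hi⟩ := h2 i; simp [rnB, hi, BrBasic]
    | out => rcases h3 with ⟨i', hi⟩ | hi <;> simp [rnB, hi, BrBasic]
  | split p => exact absurd ha (by simp [BrBasic])
  | reply p => exact absurd ha (by simp [BrBasic])

lemma rnIS_ok {ρ : Reg → Reg} (hρ : GoodRho ρ) {X : List PInstr}
    (hX : ∀ u ∈ X, InstrBasicOK BrBasic u) :
    ∀ u ∈ rnIS ρ X, InstrBasicOK BrBasic u := by
  intro u hu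
  obtain ⟨v, hv, rfl⟩ := List.mem_map.mp hu
  have := hX v hv
  cases v <;> simp_all [rnP, InstrBasicOK] <;> exact rnB_brBasic hρ this

lemma noHalt_ok {X : List PInstr} (hX : ∀ u ∈ X, InstrBasicOK BrBasic u) :
    ∀ u ∈ noHalt X, InstrBasicOK BrBasic u := by
  intro u hu
  rcases noHalt_mem hu with h | ⟨l, rfl⟩
  · exact hX u h
  · trivial

/-- Renaming used for the `j`-th block: its output goes to `aux (2j)`,
its auxiliary registers to odd-indexed aux registers tagged with `j`. -/
def rhoB (j : ℕ) : Reg → Reg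
  | .inp i => .inp i
  | .aux i => .aux (2 * Nat.pair j i + 1)
  | .out => .aux (2 * j)

/-- Renaming used for the final block: its inputs come from `aux (2j)`. -/
def rhoF (m : ℕ) : Reg → Reg
  | .inp i => .aux (2 * i)
  | .aux i => .aux (2 * Nat.pair m i + 1)
  | .out => .out

lemma rhoB_good (j : ℕ) : GoodRho (rhoB j) :=
  ⟨fun i => Or.inl ⟨i, rfl⟩, fun i => ⟨_, rfl⟩, Or.inl ⟨_, rfl⟩⟩

lemma rhoF_good (m : ℕ) : GoodRho (rhoF m) :=
  ⟨fun i => Or.inr ⟨_, rfl⟩, fun i => ⟨_, rfl⟩, Or.inr rfl⟩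

lemma rhoB_inj (j : ℕ) : Function.Injective (rhoB j) := by
  intro r r' h
  cases r <;> cases r' <;> simp [rhoB] at h ⊢ <;> omega
  
lemma rhoF_inj (m : ℕ) : Function.Injective (rhoF m) := by
  intro r r' h
  cases r <;> cases r' <;> simp [rhoF] at h ⊢ <;> omega

/-- The invariant after running the first `j` blocks. -/
def ChainInv (n : ℕ) (b : Fin n → Bool) (v : ℕ → Bool) (j : ℕ) (s : RegState) : Prop :=
  (∀ i, s (.inp i) = initState n b (.inp i)) ∧ s .out = false ∧
  (∀ j', j' < j → s (.aux (2 * j')) = v j') ∧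
  (∀ j', j ≤ j' → s (.aux (2 * j')) = false) ∧
  (∀ j' i, j ≤ j' → s (.aux (2 * Nat.pair j' i + 1)) = false)

/-- Concatenation of blocks `start, start+1, ..., start+cnt-1`. -/
def blockSeq (Y : ℕ → List PInstr) : ℕ → ℕ → List PInstr
  | _, 0 => []
  | start, cnt+1 => noHalt (rnIS (rhoB start) (Y start)) ++ blockSeq Y (start+1) cnt

lemma blockSeq_length (Y : ℕ → List PInstr) (l : ℕ) :
    ∀ (cnt start : ℕ), (∀ j, start ≤ j → j < start + cnt → (Y j).length ≤ l) →
    (blockSeq Y start cnt).length ≤ cnt * l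
  | 0, start, _ => by simp [blockSeq]
  | cnt+1, start, hY => by
    simp only [blockSeq, List.length_append, noHalt_length, rnIS_length]
    have h1 := hY start le_rfl (by omega)
    have h2 := blockSeq_length Y l cnt (start+1) (fun j hj hj' => hY j (by omega) (by omega))
    have h3 : (cnt+1) * l = cnt * l + l := Nat.succ_mul cnt l
    omega

lemma blockSeq_ok (Y : ℕ → List PInstr) :
    ∀ (cnt start : ℕ),
    (∀ j, start ≤ j → j < start + cnt → ∀ u ∈ Y j, InstrBasicOK BrBasic u) →
    ∀ u ∈ blockSeq Y start cnt, InstrBasicOK BrBasic u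
  | 0, start, _ => by simp [blockSeq]
  | cnt+1, start, hY => by
    intro u hu
    simp only [blockSeq, List.mem_append] at hu
    rcases hu with hu | hu
    · exact noHalt_ok (rnIS_ok (rhoB_good start) (hY start le_rfl (by omega))) u hu
    · exact blockSeq_ok Y cnt (start+1) (fun j hj hj' => hY j (by omega) (by omega)) u hu

/-- Running the chain of blocks establishes the invariant. -/
theorem chain (n : ℕ) (b : Fin n → Bool) (v : ℕ → Bool) (Y : ℕ → List PInstr) :
    ∀ (cnt start : ℕ) (rest : List PInstr) (s : RegState),
    ChainInv n b v start s →
    (∀ j, start ≤ j → j < start + cnt →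
      (∀ u ∈ Y j, InstrBasicOK BrBasic u) ∧
      ∃ t, exec (Y j) (initState n b) = some t ∧ t .out = v j) →
    ∃ s', exec (blockSeq Y start cnt ++ rest) s = exec rest s' ∧ ChainInv n b v (start + cnt) s'
  | 0, start, rest, s, hs, _ => ⟨s, by simp [blockSeq], by simpa using hs⟩
  | cnt+1, start, rest, s, hs, hY => by
    obtain ⟨hinp, hout, hdone, heven, hodd⟩ := hs
    obtain ⟨hok, t₁, ht₁, ht₁out⟩ := hY start le_rfl (by omega)
    have hsr : ∀ r, s (rhoB start r) = initState n b r := by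
      intro r
      cases r with
      | inp i => exact hinp i
      | aux i => exact hodd start i le_rfl
      | out => exact heven start le_rfl
    obtain ⟨t₂, hexec2, hon, hoff⟩ := exec_rename (rhoB start) (rhoB_inj start)
      (Y start) (initState n b) s t₁ hsr ht₁
    have ht₁inp : ∀ i, t₁ (.inp i) = initState n b (.inp i) :=
      exec_inp_invariant (Y start) hok _ _ ht₁
    have hInv : ChainInv n b v (start + 1) t₂ := by
      refine ⟨?_, ?_, ?_, ?_, ?_⟩
      · intro i
        have := hon (.inp i)
        simp only [rhoB] at this
        rw [this, ht₁inp i]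
      · rw [hoff .out (by intro r'; cases r' <;> simp [rhoB]), hout]
      · intro j' hj'
        rcases Nat.lt_succ_iff_lt_or_eq.mp hj' with hj' | rfl
        · rw [hoff (.aux (2 * j')) ?_, hdone j' hj']
          intro r'
          cases r' with
          | inp i => simp [rhoB]
          | aux i => simp [rhoB]; omega
          | out => simp [rhoB]; omega
        · have := hon .out
          simp only [rhoB] at this
          rw [this, ht₁out]
      · intro j' hj'
        rw [hoff (.aux (2 * j')) ?_, heven j' (by omega)]
        intro r'
        cases r' with
        | inp i => simp [rhoB]
        | aux i => simp [rhoB]; omega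
        | out => simp [rhoB]; omega
      · intro j' i hj'
        rw [hoff (.aux (2 * Nat.pair j' i + 1)) ?_, hodd j' i (by omega)]
        intro r'
        cases r' with
        | inp i' => simp [rhoB]
        | aux i' =>
          simp only [rhoB, Reg.aux.injEq, Ne]
          intro hc
          have : Nat.pair start i' = Nat.pair j' i := by omega
          have := (Nat.pair_eq_pair).mp this
          omega
        | out => simp [rhoB]; omega
    obtain ⟨s', h1, h2⟩ := chain n b v Y cnt (start+1) rest t₂ hInv
      (fun j hj hj' => hY j (by omega) (by omega))
    refine ⟨s', ?_, by rw [show start + (cnt+1) = start + 1 + cnt by omega]; exact h2⟩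
    rw [show blockSeq Y start (cnt+1) ++ rest
        = noHalt (rnIS (rhoB start) (Y start)) ++ (blockSeq Y (start+1) cnt ++ rest) by
      simp [blockSeq, List.append_assoc]]
    rw [exec_noHalt_append _ s t₂ _ hexec2]
    exact h1

end Aux3

section Aux4

lemma poly_eval_mono (p : Polynomial ℕ) {a b : ℕ} (h : a ≤ b) : p.eval a ≤ p.eval b := by
  rw [Polynomial.eval_eq_sum_range, Polynomial.eval_eq_sum_range]
  exact Finset.sum_le_sum fun i _ => Nat.mul_le_mul_left _ (Nat.pow_le_pow_left h i)

/-- Composition: substituting computed functions into the inputs of a program. -/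
theorem computes_comp {n m1 l1 : ℕ} (h1 : Fin m1 → (Fin n → Bool) → Bool)
    (hX1 : ∀ j : Fin m1, ∃ X : List PInstr, ISbr X ∧ Computes (h1 j) X ∧ X.length ≤ l1)
    (g : (Fin m1 → Bool) → Bool) (X2 : List PInstr) (hne : X2 ≠ [])
    (hok2 : ∀ u ∈ X2, InstrBasicOK BrBasic u) (hc : Computes g X2) :
    ∃ Z : List PInstr, ISbr Z ∧ Computes (fun b => g (fun j => h1 j b)) Z ∧
      Z.length ≤ m1 * l1 + X2.length := by
  classical
  set Y : ℕ → List PInstr := fun j =>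
    if h : j < m1 then (hX1 ⟨j, h⟩).choose else [.halt] with hYdef
  have hYspec : ∀ j (h : j < m1), ISbr (Y j) ∧ Computes (h1 ⟨j, h⟩) (Y j) ∧ (Y j).length ≤ l1 := by
    intro j h
    simp only [hYdef, dif_pos h]
    exact (hX1 ⟨j, h⟩).choose_spec
  refine ⟨blockSeq Y 0 m1 ++ rnIS (rhoF m1) X2, ⟨?_, ?_⟩, ?_, ?_⟩
  · simp [rnIS, hne]
  · intro u hu
    rcases List.mem_append.mp hu with hu | hu
    · exact blockSeq_ok Y m1 0 (fun j hj hj' => ((hYspec j (by omega)).1).2) u hu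
    · exact rnIS_ok (rhoF_good m1) hok2 u hu
  · intro b
    set v : ℕ → Bool := fun j => if h : j < m1 then h1 ⟨j, h⟩ b else false with hvdef
    have hInv0 : ChainInv n b v 0 (initState n b) :=
      ⟨fun i => rfl, rfl, fun j' hj' => absurd hj' (by omega), fun _ _ => rfl, fun _ _ _ => rfl⟩
    have hYrun : ∀ j, 0 ≤ j → j < 0 + m1 →
        (∀ u ∈ Y j, InstrBasicOK BrBasic u) ∧
        ∃ t, exec (Y j) (initState n b) = some t ∧ t .out = v j := by
      intro j hj hj'
      have h : j < m1 := by omega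
      obtain ⟨⟨_, hok⟩, hcomp, _⟩ := hYspec j h
      obtain ⟨t, ht, htout⟩ := hcomp b
      exact ⟨hok, t, ht, by rw [htout]; simp [hvdef, h]⟩
    obtain ⟨s', hs'1, hs'2⟩ := chain n b v Y m1 0 (rnIS (rhoF m1) X2) (initState n b) hInv0 hYrun
    obtain ⟨hinp, hout, hdone, heven, hodd⟩ := hs'2
    set b'' : Fin m1 → Bool := fun j => h1 j b with hb''
    obtain ⟨t₁, ht₁, ht₁out⟩ := hc b''
    have hsr : ∀ r, s' (rhoF m1 r) = initState m1 b'' r := by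
      intro r
      cases r with
      | inp i =>
        by_cases h : i < m1
        · rw [show rhoF m1 (.inp i) = .aux (2 * i) from rfl, hdone i (by omega)]
          simp [initState, hvdef, h, hb'']
        · rw [show rhoF m1 (.inp i) = .aux (2 * i) from rfl, heven i (by omega)]
          simp [initState, h]
      | aux i => exact hodd m1 i (by omega)
      | out => exact hout
    obtain ⟨t₂, hexec2, hon, _⟩ := exec_rename (rhoF m1) (rhoF_inj m1) X2
      (initState m1 b'') s' t₁ hsr ht₁
    refine ⟨t₂, ?_, ?_⟩
    · rw [hs'1, hexec2]
    · have := hon .out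
      rw [show rhoF m1 .out = .out from rfl] at this
      rw [this, ht₁out]
  · rw [List.length_append, rnIS_length]
    have := blockSeq_length Y l1 m1 0 (fun j hj hj' => (hYspec j (by omega)).2.2)
    omega

end Aux4

/-- Proposition 1.2 of the paper: non-uniform polynomial-length reducibility
is reflexive and transitive. -/
theorem statement9 :
    (∀ F : (n : ℕ) → (Fin n → Bool) → Bool, PLRed F F) ∧
    (∀ F G H : (n : ℕ) → (Fin n → Bool) → Bool,
      PLRed F G → PLRed G H → PLRed F H) := by
  constructor
  · intro F
    refine ⟨Polynomial.X + Polynomial.C 3, fun n => ⟨3, n, ?_, ?_, ?_⟩⟩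
    · simp
    · simp
    · refine ⟨fun j b => b j, fun j => ?_, fun b => rfl⟩
      refine ⟨[.pos (.get (.inp j)), .plain (.set .out true), .halt],
        ⟨by simp, ?_⟩, ?_, by simp⟩
      · intro u hu
        fin_cases hu <;> trivial
      · intro b
        have hj : initState n b (.inp j) = b j := by simp [initState, j.isLt]
        cases hbj : b j with
        | true =>
          refine ⟨Function.update (initState n b) .out true, ?_, by simp [hbj]⟩
          simp [exec, BInstr.isSplitReply, BInstr.rpl, BInstr.effect, hj, hbj]
        | false =>
          refine ⟨initState n b, ?_, by simp [initState, hbj]⟩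
          simp [exec, BInstr.isSplitReply, BInstr.rpl, BInstr.effect, hj, hbj]
  · rintro F G H ⟨q1, hq1⟩ ⟨q2, hq2⟩
    refine ⟨q1 * q1 + q2.comp q1, fun n => ?_⟩
    obtain ⟨l1, m1, hl1, hm1, h1, hprog1, heq1⟩ := hq1 n
    obtain ⟨l2, m2, hl2, hm2, h2, hprog2, heq2⟩ := hq2 m1
    have heval : (q1 * q1 + q2.comp q1).eval n
        = q1.eval n * q1.eval n + q2.eval (q1.eval n) := by
      simp [Polynomial.eval_comp]
    have hmono : q2.eval m1 ≤ q2.eval (q1.eval n) := poly_eval_mono q2 hm1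
    have hmul : m1 * l1 ≤ q1.eval n * q1.eval n := Nat.mul_le_mul hm1 hl1
    refine ⟨m1 * l1 + l2, m2, by omega, by omega, ?_⟩
    refine ⟨fun k b => h2 k (fun j => h1 j b), ?_, ?_⟩
    · intro k
      obtain ⟨X2, ⟨hne, hok⟩, hcomp, hlen2⟩ := hprog2 k
      obtain ⟨Z, hZ1, hZ2, hZ3⟩ := computes_comp h1 hprog1 (h2 k) X2 hne hok hcomp
      exact ⟨Z, hZ1, hZ2, hZ3.trans (by omega)⟩
    · intro b
      rw [heq1 b, heq2 (fun j => h1 j b)]
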